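/- Let R be a commutative noetherian local ring and M a finitely generated R-module of finite projective dimension, with finite free resolution F. Then M has rank and χ(M) := Σ_n (-1)^n rank_R(F_n) equals rank_R(M); in particular χ(M) ≥ 0 and χ(M) is independent of the choice of finite free resolution. -/

import Mathlib

open CategoryTheory Opposite IsLocalRing

noncomputable section

universe u

variable (R : Type u) [CommRing R]

/-- The minimal number of generators of a module. -/
def nGens (M : Type u) [AddCommGroup M] [Module R M] : ℕ :=
  sInf {n | ∃ s : Finset M, s.card = n ∧ Submodule.span R (s : Set M) = ⊤}

/-- The length of a module, i.e. the length of a longest chain of submodules,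
as a natural number (junk value `0` if infinite). -/
def lengthNat (M : Type u) [AddCommGroup M] [Module R M] : ℕ :=
  (WithBot.unbotD 0 (Order.krullDim (Submodule R M))).toNat

/-- `M` has rank `r`: the localization of `M` at the set of nonzerodivisors of `R`
is free of rank `r`. -/
def HasRank (M : Type u) [AddCommGroup M] [Module R M] (r : ℕ) : Prop :=
  Nonempty (LocalizedModule (nonZeroDivisors R) M ≃ₗ[Localization (nonZeroDivisors R)]
    (Fin r → Localization (nonZeroDivisors R)))

/-- A finitely generated module `G` is totally reflexive if the biduality map
`G → G^{**}` is bijective and `Ext^i(G, R) = 0 = Ext^i(G^*, R)` for all `i ≥ 1`. -/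
def IsTotallyReflexive (M : Type u) [AddCommGroup M] [Module R M] : Prop :=
  Module.Finite R M ∧ Function.Bijective (Module.Dual.eval R M) ∧
  (∀ i : ℕ, 0 < i →
    Subsingleton (((Ext R (ModuleCat.{u} R) i).obj (op (ModuleCat.of R M))).obj
      (ModuleCat.of R R))) ∧
  (∀ i : ℕ, 0 < i →
    Subsingleton (((Ext R (ModuleCat.{u} R) i).obj (op (ModuleCat.of R (Module.Dual R M)))).obj
      (ModuleCat.of R R)))

/-- A resolution of a module `M`: a nonnegatively graded chain complex together with
an augmentation map to `M` making the augmented complex exact. -/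
structure Resolution (M : Type u) [AddCommGroup M] [Module R M] where
  C : ChainComplex (ModuleCat.{u} R) ℕ
  aug : C.X 0 →ₗ[R] M
  aug_surj : Function.Surjective aug
  exact_zero : Function.Exact (C.d 1 0) aug
  exact_succ : ∀ n : ℕ, Function.Exact (C.d (n + 2) (n + 1)) (C.d (n + 1) n)

namespace Resolution

variable {R}
variable {M : Type u} [AddCommGroup M] [Module R M]

/-- A resolution is bounded if its modules vanish in all high degrees. -/
def IsBounded (P : Resolution R M) : Prop := ∃ N : ℕ, ∀ n, N < n → Subsingleton (P.C.X n)

/-- A resolution has length at most `i` if its modules vanish in degrees above `i`. -/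
def LengthLE (P : Resolution R M) (i : ℕ) : Prop := ∀ n, i < n → Subsingleton (P.C.X n)

/-- A G-resolution: all modules in the resolution are totally reflexive. -/
def IsG (P : Resolution R M) : Prop := ∀ n, IsTotallyReflexive R (P.C.X n)

/-- A resolution by finitely generated free modules. -/
def IsFiniteFree (P : Resolution R M) : Prop :=
  ∀ n, Module.Free R (P.C.X n) ∧ Module.Finite R (P.C.X n)

/-- A strict G-resolution: degree `0` is totally reflexive and all positive degrees are
finitely generated free. -/
def IsStrict (P : Resolution R M) : Prop :=
  IsTotallyReflexive R (P.C.X 0) ∧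
    ∀ n : ℕ, Module.Free R (P.C.X (n + 1)) ∧ Module.Finite R (P.C.X (n + 1))

/-- Minimality of a resolution over a local ring: each differential maps into
`m` times the next module. -/
def IsMinimal [IsLocalRing R] (P : Resolution R M) : Prop :=
  ∀ n : ℕ, LinearMap.range (P.C.d (n + 1) n).hom ≤
    (maximalIdeal R) • (⊤ : Submodule R (P.C.X n))

/-- A resolution is proper if `Hom(H, -)` applied to the augmented resolution is exact for
every totally reflexive module `H`. -/
def IsProper (P : Resolution R M) : Prop :=
  ∀ (H : Type u) [AddCommGroup H] [Module R H], IsTotallyReflexive R H →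
    (Function.Surjective (fun g : H →ₗ[R] P.C.X 0 => P.aug ∘ₗ g)) ∧
    Function.Exact (fun g : H →ₗ[R] P.C.X 1 => ((P.C.d 1 0).hom : P.C.X 1 →ₗ[R] P.C.X 0) ∘ₗ g)
      (fun g : H →ₗ[R] P.C.X 0 => P.aug ∘ₗ g) ∧
    ∀ n : ℕ, Function.Exact
      (fun g : H →ₗ[R] P.C.X (n + 2) =>
        ((P.C.d (n + 2) (n + 1)).hom : P.C.X (n + 2) →ₗ[R] P.C.X (n + 1)) ∘ₗ g)
      (fun g : H →ₗ[R] P.C.X (n + 1) =>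
        ((P.C.d (n + 1) n).hom : P.C.X (n + 1) →ₗ[R] P.C.X n) ∘ₗ g)

end Resolution

/-- `M` has finite projective dimension: it admits a bounded resolution by finitely
generated free modules. -/
def HasFinitePD (M : Type u) [AddCommGroup M] [Module R M] : Prop :=
  ∃ P : Resolution R M, P.IsFiniteFree ∧ P.IsBounded

/-- `M` has finite G-dimension: it admits a bounded G-resolution. -/
def HasFiniteGDim (M : Type u) [AddCommGroup M] [Module R M] : Prop :=
  ∃ P : Resolution R M, P.IsG ∧ P.IsBounded

/-- `G-dim M ≤ i`. -/
def GDimLE (M : Type u) [AddCommGroup M] [Module R M] (i : ℕ) : Prop :=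
  ∃ P : Resolution R M, P.IsG ∧ P.LengthLE i

section Betti

variable [IsLocalRing R]

/-- Precomposition with `f`, on homomorphisms into the residue field. -/
def homRes {A B : ModuleCat.{u} R} (f : A ⟶ B) :
    (B →ₗ[R] ResidueField R) →ₗ[ResidueField R] (A →ₗ[R] ResidueField R) where
  toFun g := g ∘ₗ (f.hom : A →ₗ[R] B)
  map_add' g₁ g₂ := by ext; rfl
  map_smul' c g := by ext; rfl

/-- The `n`-th Betti number of a complex `C`, defined as the dimension over the residue
field of the `n`-th cohomology of `Hom(C, k)`.  Applied to a proper G-resolution of `M`,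
this is the `n`-th relative Betti number `β^G_n(M)` of Avramov–Martsinkovsky; applied to a
free resolution of `M` it is the classical Betti number `β_n(M)`. -/
def gBetti (C : ChainComplex (ModuleCat.{u} R) ℕ) : ℕ → ℕ
  | 0 => Module.finrank (ResidueField R) (LinearMap.ker (homRes R (C.d 1 0)))
  | (n + 1) => Module.finrank (ResidueField R)
      (@HasQuotient.Quotient _ _ (@Submodule.hasQuotient (ResidueField R)
          (LinearMap.ker (homRes R (C.d (n + 2) (n + 1)))) _ _ _)
        ((LinearMap.range (homRes R (C.d (n + 1) n))).comap
          (LinearMap.ker (homRes R (C.d (n + 2) (n + 1)))).subtype))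

/-- The Euler characteristic of (the Betti numbers of) a complex:
`χ = Σ_n (-1)^n β_n`. -/
def gChi (C : ChainComplex (ModuleCat.{u} R) ℕ) : ℤ :=
  ∑ᶠ n : ℕ, (-1 : ℤ) ^ n * (gBetti R C n : ℤ)

/-- The `i`-th partial Euler characteristic of a complex: `χ_i = Σ_{n ≥ i} (-1)^{n-i} β_n`. -/
def gChiAt (C : ChainComplex (ModuleCat.{u} R) ℕ) (i : ℕ) : ℤ :=
  ∑ᶠ n : ℕ, if i ≤ n then (-1 : ℤ) ^ (n - i) * (gBetti R C n : ℤ) else 0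

end Betti

end



namespace EulerAux

universe v




open Ideal

variable (A : Type v) [CommRing A]

/-- Maximal elements of the set of associated primes. -/
def MaxAss : Set (Ideal A) :=
  {p | p ∈ associatedPrimes A A ∧ ∀ q ∈ associatedPrimes A A, p ≤ q → q = p}

variable {A}

lemma maxAss_finite [IsNoetherianRing A] : (MaxAss A).Finite := by
  classical
  by_contra hinf
  have hinf' : (MaxAss A).Infinite := hinf
  obtain e := hinf'.natEmbedding
  set p : ℕ → Ideal A := fun i => (e i : Ideal A) with hp
  have pinj : Function.Injective p := fun i j h => e.injective (Subtype.ext h)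
  have pass : ∀ i, IsAssociatedPrime (p i) A := fun i => (e i).2.1
  have pmax : ∀ i, ∀ q ∈ associatedPrimes A A, p i ≤ q → q = p i := fun i => (e i).2.2
  have hx : ∀ i, ∃ x : A, p i = (Submodule.span A {x}).annihilator := by
    intro i
    obtain ⟨-, x, hx⟩ := isAssociatedPrime_iff.mp (pass i)
    exact ⟨x, by rw [hx]; ext a; simp [Submodule.mem_annihilator_span_singleton]⟩
  choose x hxs using hx
  have key : ∀ i j, i ≠ j → ∃ c, c ∈ p i ∧ c ∉ p j := by
    intro i j hij
    by_contra hcon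
    push_neg at hcon
    have hle : p i ≤ p j := fun c hci => hcon c hci
    exact hij (pinj (pmax i (p j) (pass j) hle)).symm
  have key' : ∀ i j, ∃ c, i ≠ j → c ∈ p i ∧ c ∉ p j := by
    intro i j
    by_cases h : i = j
    · exact ⟨0, fun h' => (h' h).elim⟩
    · obtain ⟨c, h1, h2⟩ := key i j h
      exact ⟨c, fun _ => ⟨h1, h2⟩⟩
  choose c hc using key'
  set N : ℕ →o Submodule A A :=
    ⟨fun k => Submodule.span A (x '' Set.Iio k), by
      intro a b hab
      exact Submodule.span_mono (Set.image_mono fun t ht => lt_of_lt_of_le ht hab)⟩ with hN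
  obtain ⟨k, hk⟩ := monotone_stabilizes_iff_noetherian.mpr inferInstance N
  have hxk : x k ∈ N k := by
    rw [hk (k + 1) k.le_succ]
    exact Submodule.subset_span ⟨k, by simp, rfl⟩
  set cc := ∏ i ∈ Finset.range k, c i k with hcc
  have hcck : cc ∉ p k := by
    intro hmem
    obtain ⟨i, hi, hci⟩ := (Ideal.IsPrime.prod_mem_iff (hp := (pass k).isPrime)).mp hmem
    have hik : i ≠ k := by simp only [Finset.mem_range] at hi; omega
    exact (hc i k hik).2 hci
  have hann : ∀ y ∈ N k, cc * y = 0 := by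
    intro y hy
    have : (N k : Set A) ⊆ {y | cc * y = 0} := by
      have hsub : N k ≤ LinearMap.ker (LinearMap.mulLeft A cc) := by
        rw [hN]
        apply Submodule.span_le.mpr
        rintro - ⟨i, hi, rfl⟩
        simp only [Set.mem_Iio] at hi
        have hik : i ≠ k := by omega
        have hcipi : cc ∈ p i := by
          have hdvd : c i k ∣ cc := Finset.dvd_prod_of_mem _ (Finset.mem_range.mpr hi)
          obtain ⟨z, hz⟩ := hdvd
          rw [hz]
          exact Ideal.mul_mem_right _ _ (hc i k hik).1
        have : cc • x i = 0 := by
          rw [hxs i] at hcipi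
          exact (Submodule.mem_annihilator_span_singleton _ _).mp hcipi
        simpa [smul_eq_mul] using this
      intro y hy
      simpa using hsub hy
    exact this hy
  have : cc ∈ p k := by
    rw [hxs k]
    rw [Submodule.mem_annihilator_span_singleton, smul_eq_mul]
    exact hann _ hxk
  exact hcck this

variable (A) in
lemma maximal_mem_maxAss [IsNoetherianRing A]
    (hu : ∀ a ∈ nonZeroDivisors A, IsUnit a)
    (m : Ideal A) (hm : m.IsMaximal) : m ∈ MaxAss A := by
  classical
  have hzd' : (m : Set A) ⊆ ⋃ p ∈ MaxAss A, (p : Set A) := by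
    intro a ha
    have hnu : ¬IsUnit a := fun h => hm.ne_top (Ideal.eq_top_of_isUnit_mem _ ha h)
    have hnzd : a ∉ nonZeroDivisors A := fun h => hnu (hu a h)
    rw [mem_nonZeroDivisors_iff_right] at hnzd
    push_neg at hnzd
    obtain ⟨z, hz1, hz2⟩ := hnzd
    obtain ⟨p, hp, hap⟩ := exists_le_isAssociatedPrime_of_isNoetherianRing A z hz2
    have hap : a ∈ p := hap (by
      rw [Submodule.mem_colon_singleton, Submodule.mem_bot, smul_eq_mul, mul_comm]
      exact hz1)
    obtain ⟨q, hq, hqmax⟩ :=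
      (set_has_maximal_iff_noetherian.mpr inferInstance)
        {q : Submodule A A | q ∈ associatedPrimes A A ∧ p ≤ q} ⟨p, hp, le_refl p⟩
    refine Set.mem_iUnion.mpr ⟨q, Set.mem_iUnion.mpr ⟨⟨hq.1, ?_⟩, hq.2 hap⟩⟩
    intro q' hq' hle
    exact (hle.lt_or_eq.resolve_left (hqmax q' ⟨hq', le_trans hq.2 hle⟩)).symm
  have hfin := maxAss_finite (A := A)
  obtain ⟨p, hps, hmp⟩ := (Ideal.subset_union_prime (s := hfin.toFinset)
      (f := fun p => p) (⊥ : Ideal A) ⊥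
      (fun p hp _ _ => by
        rw [Set.Finite.mem_toFinset] at hp
        exact hp.1.isPrime) (I := m)).mp (by
      intro a ha
      have := hzd' ha
      simp only [Set.mem_iUnion] at this ⊢
      obtain ⟨p, hp, hap⟩ := this
      exact ⟨p, by rw [Set.Finite.coe_toFinset]; exact hp, hap⟩)
  rw [Set.Finite.mem_toFinset] at hps
  have : m = p := hm.eq_of_le hps.1.1.ne_top hmp
  rw [this]
  exact hps

lemma maximal_finite [IsNoetherianRing A]
    (hu : ∀ a ∈ nonZeroDivisors A, IsUnit a) :
    {m : Ideal A | m.IsMaximal}.Finite :=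
  maxAss_finite.subset fun m hm => maximal_mem_maxAss A hu m hm

lemma maximal_ann [IsNoetherianRing A]
    (hu : ∀ a ∈ nonZeroDivisors A, IsUnit a)
    (m : Ideal A) (hm : m.IsMaximal) : ∃ x : A, x ≠ 0 ∧ ∀ a ∈ m, a * x = 0 := by
  obtain ⟨hass, -⟩ := maximal_mem_maxAss A hu m hm
  obtain ⟨-, x, hx⟩ := isAssociatedPrime_iff.mp hass
  refine ⟨x, ?_, ?_⟩
  · rintro rfl
    rw [show (⊥ : Submodule A A).colon {(0:A)} = ⊤ by ext a; simp] at hx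
    exact hm.ne_top hx
  · intro a ha
    rw [hx] at ha
    simpa [smul_eq_mul] using (Submodule.mem_colon_singleton).mp ha



lemma exists_unit_combination {A : Type v} [CommRing A]
    (hfin : {m : Ideal A | m.IsMaximal}.Finite)
    {c : ℕ} (v : Fin (c + 1) → A)
    (hv : ∀ m : Ideal A, m.IsMaximal → ∃ j, v j ∉ m) :
    ∃ t : Fin (c + 1) → A, t 0 = 1 ∧ IsUnit (∑ j, t j * v j) := by
  classical
  set T := hfin.toFinset with hT
  have hTmem : ∀ m : Ideal A, m ∈ T ↔ m.IsMaximal := fun m => Set.Finite.mem_toFinset _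
  set bad := T.filter (fun m => v 0 ∈ m) with hbad
  -- for bad m, a nonzero coordinate with nonzero index
  have hj : ∀ m ∈ bad, ∃ j : Fin (c + 1), v j ∉ m ∧ j ≠ 0 := by
    intro m hm
    rw [hbad, Finset.mem_filter] at hm
    obtain ⟨j, hjm⟩ := hv m ((hTmem m).mp hm.1)
    refine ⟨j, hjm, ?_⟩
    rintro rfl
    exact hjm hm.2
  -- choice of index functions
  set jm : Ideal A → Fin (c + 1) := fun m =>
    if h : ∃ j : Fin (c + 1), v j ∉ m ∧ j ≠ 0 then h.choose else 0 with hjm'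
  have hjm1 : ∀ m ∈ bad, v (jm m) ∉ m ∧ jm m ≠ 0 := by
    intro m hm
    obtain h := hj m hm
    simp only [hjm', dif_pos h]
    exact h.choose_spec
  -- separating elements
  set dd : Ideal A → Ideal A → A := fun m m' =>
    if h : ∃ a, a ∈ m' ∧ a ∉ m then h.choose else 1 with hdd
  have hdd1 : ∀ m m', m.IsMaximal → m'.IsMaximal → m ≠ m' → dd m m' ∈ m' ∧ dd m m' ∉ m := by
    intro m m' hm hm' hne
    have hex : ∃ a, a ∈ m' ∧ a ∉ m := by
      by_contra hcon
      push_neg at hcon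
      exact hne (hm'.eq_of_le hm.ne_top hcon).symm
    simp only [hdd, dif_pos hex]
    exact hex.choose_spec
  set w : Ideal A → A := fun m => ∏ m' ∈ T.erase m, dd m m' with hw
  have hw1 : ∀ m ∈ T, ∀ m₀ ∈ T, m ≠ m₀ → w m ∈ m₀ := by
    intro m hm m₀ hm₀ hne
    have : dd m m₀ ∣ w m := Finset.dvd_prod_of_mem _ (Finset.mem_erase.mpr ⟨(Ne.symm hne), hm₀⟩)
    obtain ⟨z, hz⟩ := this
    rw [hz]
    exact Ideal.mul_mem_right _ _ (hdd1 m m₀ ((hTmem _).mp hm) ((hTmem _).mp hm₀) hne).1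
  have hw2 : ∀ m ∈ T, w m ∉ m := by
    intro m hm
    intro hmem
    haveI : (m : Ideal A).IsPrime := ((hTmem _).mp hm).isPrime
    obtain ⟨m', hm', hmm⟩ := (Ideal.IsPrime.prod_mem_iff).mp hmem
    rw [Finset.mem_erase] at hm'
    exact (hdd1 m m' ((hTmem _).mp hm) ((hTmem _).mp hm'.2) (Ne.symm hm'.1)).2 hmm
  -- the unit
  set s := v 0 + ∑ m ∈ bad, w m * v (jm m) with hs
  have hsnot : ∀ m₀ ∈ T, s ∉ m₀ := by
    intro m₀ hm₀ hmem
    by_cases h0 : v 0 ∈ m₀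
    · have hm₀bad : m₀ ∈ bad := Finset.mem_filter.mpr ⟨hm₀, h0⟩
      have hrest : ∑ m ∈ bad.erase m₀, w m * v (jm m) ∈ m₀ := by
        apply Ideal.sum_mem
        intro m hm
        rw [Finset.mem_erase] at hm
        exact Ideal.mul_mem_right _ _
          (hw1 m (Finset.mem_of_mem_filter m hm.2) m₀ hm₀ hm.1)
      have hsum : ∑ m ∈ bad, w m * v (jm m)
          = w m₀ * v (jm m₀) + ∑ m ∈ bad.erase m₀, w m * v (jm m) :=
        (Finset.add_sum_erase _ _ hm₀bad).symm
      have hterm : w m₀ * v (jm m₀) ∈ m₀ := by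
        have : w m₀ * v (jm m₀) = s - v 0 - ∑ m ∈ bad.erase m₀, w m * v (jm m) := by
          rw [hs, hsum]; ring
        rw [this]
        exact Ideal.sub_mem _ (Ideal.sub_mem _ hmem h0) hrest
      haveI : (m₀ : Ideal A).IsPrime := ((hTmem _).mp hm₀).isPrime
      rcases Ideal.IsPrime.mem_or_mem ‹_› hterm with h | h
      · exact hw2 m₀ hm₀ h
      · exact (hjm1 m₀ hm₀bad).1 h
    · have hall : ∑ m ∈ bad, w m * v (jm m) ∈ m₀ := by
        apply Ideal.sum_mem
        intro m hm
        have hne : m ≠ m₀ := by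
          rintro rfl
          exact h0 (Finset.mem_filter.mp hm).2
        exact Ideal.mul_mem_right _ _ (hw1 m (Finset.mem_of_mem_filter m hm) m₀ hm₀ hne)
      exact h0 (by
        have : v 0 = s - ∑ m ∈ bad, w m * v (jm m) := by rw [hs]; ring
        rw [this]
        exact Ideal.sub_mem _ hmem hall)
  have hsunit : IsUnit s := by
    by_contra hns
    obtain ⟨m₀, hm₀, hsm⟩ := Ideal.exists_le_maximal (Ideal.span {s})
      (by simpa [Ideal.span_singleton_eq_top] using hns)
    exact hsnot m₀ ((hTmem m₀).mpr hm₀) (hsm (Ideal.subset_span rfl))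
  -- assemble coefficients
  refine ⟨fun j => (if j = 0 then 1 else 0) +
      ∑ m ∈ bad.filter (fun m => jm m = j), w m, ?_, ?_⟩
  · have hz : ∀ m ∈ bad.filter (fun m => jm m = (0 : Fin (c+1))), w m = (0:A) := fun m hm =>
      absurd (Finset.mem_filter.mp hm).2 (hjm1 m (Finset.mem_of_mem_filter _ hm)).2
    simp [Finset.sum_eq_zero hz]
  · have hsum2 : ∑ j, ((if j = (0 : Fin (c+1)) then (1:A) else 0) +
        ∑ m ∈ bad.filter (fun m => jm m = j), w m) * v j = s := by
      rw [hs]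
      rw [Finset.sum_congr rfl (fun j _ => add_mul _ _ _)]
      rw [Finset.sum_add_distrib]
      congr 1
      · simp [Finset.sum_ite_eq']
      · rw [← Finset.sum_fiberwise_of_maps_to (g := jm) (t := Finset.univ)
          (fun m _ => Finset.mem_univ (jm m)) (fun m => w m * v (jm m))]
        apply Finset.sum_congr rfl
        intro j _
        rw [Finset.sum_mul]
        apply Finset.sum_congr rfl
        intro m hm
        rw [Finset.mem_filter] at hm
        rw [hm.2]
    rw [hsum2]
    exact hsunit



lemma ker_basis {A : Type v} [CommRing A] {B : Type v} [AddCommGroup B] [Module A B]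
    {k : ℕ} (b : Module.Basis (Fin (k + 1)) A B) (g : B →ₗ[A] A) (hg : IsUnit (g (b 0))) :
    Nonempty (Module.Basis (Fin k) A (LinearMap.ker g)) := by
  classical
  obtain ⟨u, huspec⟩ := hg
  have hu : (↑u⁻¹ : A) * g (b 0) = 1 := by rw [← huspec]; exact u.inv_mul
  set uinv : A := (↑u⁻¹ : A) with huinv
  set v : Fin k → B := fun i => b i.succ - (uinv * g (b i.succ)) • b 0 with hv
  have hvker : ∀ i, g (v i) = 0 := by
    intro i
    rw [hv]
    simp only [map_sub, map_smul, smul_eq_mul]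
    have : uinv * g (b i.succ) * g (b 0) = g (b i.succ) := by
      rw [mul_comm uinv (g (b i.succ)), mul_assoc, hu, mul_one]
    rw [this, sub_self]
  have hrepr : ∀ (co : Fin k → A) (i₀ : Fin k),
      b.repr (∑ i, co i • v i) i₀.succ = co i₀ := by
    intro co i₀
    rw [map_sum, Finsupp.finset_sum_apply]
    have hterm : ∀ i : Fin k,
        (b.repr (co i • v i)) i₀.succ = co i * (if i = i₀ then 1 else 0) := by
      intro i
      have h0 : ¬((0 : Fin (k+1)) = i₀.succ) := (Fin.succ_ne_zero i₀).symm
      rw [map_smul, hv]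
      simp only [map_sub, map_smul, Module.Basis.repr_self, Finsupp.smul_apply,
        Finsupp.sub_apply, Finsupp.single_apply, smul_eq_mul, Fin.succ_inj, h0,
        if_false, mul_zero, sub_zero]
    rw [Finset.sum_congr rfl (fun i _ => hterm i)]
    simp [Finset.sum_ite_eq']
  have hspan : ∀ z : B, g z = 0 → z = ∑ i, (b.repr z i.succ) • v i := by
    intro z hz
    set co : Fin k → A := fun i => b.repr z i.succ with hco
    set y := z - ∑ i, co i • v i with hy
    have hysucc : ∀ i₀ : Fin k, b.repr y i₀.succ = 0 := by
      intro i₀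
      rw [hy, map_sub, Finsupp.sub_apply, hrepr co i₀]
      simp [hco]
    have hyrep : y = b.repr y 0 • b 0 := by
      conv_lhs => rw [← b.sum_repr y]
      rw [Fin.sum_univ_succ]
      rw [Finset.sum_eq_zero (fun i _ => by rw [hysucc i, zero_smul])]
      rw [add_zero]
    have hgy : g y = 0 := by
      rw [hy, map_sub, hz, map_sum, zero_sub, neg_eq_zero]
      rw [Finset.sum_eq_zero]
      intro i _
      rw [map_smul, hvker i, smul_zero]
    have h0 : b.repr y 0 = 0 := by
      have : b.repr y 0 * g (b 0) = 0 := by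
        rw [hyrep] at hgy
        rw [map_smul, smul_eq_mul] at hgy
        exact hgy
      have := congrArg (uinv * ·) this
      simp only [mul_zero] at this
      rw [← mul_assoc, mul_comm uinv _, mul_assoc, hu, mul_one] at this
      exact this
    have : y = 0 := by rw [hyrep, h0, zero_smul]
    rw [hy] at this
    exact (sub_eq_zero.mp this)
  set w : Fin k → LinearMap.ker g := fun i => ⟨v i, LinearMap.mem_ker.mpr (hvker i)⟩ with hw
  have hli : LinearIndependent A w := by
    rw [Fintype.linearIndependent_iff]
    intro co hco i₀
    have : ((∑ i, co i • w i : LinearMap.ker g) : B) = ∑ i, co i • v i := by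
      simp [hw]
    rw [hco] at this
    have h2 : b.repr (∑ i, co i • v i) i₀.succ = 0 := by
      rw [← this]; simp
    exact (hrepr co i₀).symm.trans h2
  have hsp : ⊤ ≤ Submodule.span A (Set.range w) := by
    rintro ⟨z, hz⟩ -
    have hz' : g z = 0 := LinearMap.mem_ker.mp hz
    have hrep := hspan z hz'
    have : (⟨z, hz⟩ : LinearMap.ker g) = ∑ i, (b.repr z i.succ) • w i := by
      apply Subtype.ext
      simpa [hw] using hrep
    rw [this]
    exact Submodule.sum_mem _ (fun i _ => Submodule.smul_mem _ _
      (Submodule.subset_span (Set.mem_range_self i)))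
  exact ⟨Module.Basis.mk hli hsp⟩

lemma key_ses {A : Type v} [CommRing A] [Nontrivial A]
    (hfin : {m : Ideal A | m.IsMaximal}.Finite)
    (hann : ∀ m : Ideal A, m.IsMaximal → ∃ x : A, x ≠ 0 ∧ ∀ a ∈ m, a * x = 0) :
    ∀ (n : ℕ) (B C N : Type v) [AddCommGroup B] [AddCommGroup C] [AddCommGroup N]
      (_ : Module A B) (_ : Module A C) (_ : Module A N)
      (c : ℕ) (bB : Module.Basis (Fin n) A B) (bC : Module.Basis (Fin c) A C)
      (φ : B →ₗ[A] C) (π : C →ₗ[A] N),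
      Function.Injective φ → Function.Surjective π → Function.Exact φ π →
      ∃ r : ℕ, r + n = c ∧ Nonempty (N ≃ₗ[A] (Fin r → A)) := by
  intro n
  induction n with
  | zero =>
    intro B C N _ _ _ _ _ _ c bB bC φ π hinj hsurj hexact
    haveI : Subsingleton B := ⟨fun x y => by
      rw [← bB.sum_repr x, ← bB.sum_repr y]; simp⟩
    have hπinj : Function.Injective π := by
      intro x y hxy
      have h0 : π (x - y) = 0 := by rw [map_sub, hxy, sub_self]
      obtain ⟨bb, hbb⟩ := (hexact (x - y)).mp h0
      have : bb = 0 := Subsingleton.elim _ _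
      rw [this, map_zero] at hbb
      exact sub_eq_zero.mp hbb.symm
    exact ⟨c, by omega,
      ⟨((LinearEquiv.ofBijective π ⟨hπinj, hsurj⟩).symm.trans bC.equivFun)⟩⟩
  | succ n IH =>
    intro B C N _ _ _ _ _ _ c bB bC φ π hinj hsurj hexact
    cases c with
    | zero =>
      exfalso
      haveI : Subsingleton C := ⟨fun x y => by
        rw [← bC.sum_repr x, ← bC.sum_repr y]; simp⟩
      have h1 : φ (bB 0) = φ 0 := Subsingleton.elim _ _
      exact bB.ne_zero 0 (hinj h1)
    | succ c' =>
      set v := φ (bB 0) with hvdef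
      set vc : Fin (c' + 1) → A := fun j => bC.repr v j with hvc
      have hv : ∀ m : Ideal A, m.IsMaximal → ∃ j, vc j ∉ m := by
        intro m hm
        by_contra hcon
        push_neg at hcon
        obtain ⟨x, hx0, hxann⟩ := hann m hm
        have h1 : bC.repr (x • v) = 0 := by
          ext j
          rw [map_smul, Finsupp.smul_apply, smul_eq_mul, mul_comm]
          exact hxann _ (hcon j)
        have h2 : x • v = 0 := by
          have := congrArg bC.repr.symm h1
          simpa using this
        have h3 : φ (x • bB 0) = 0 := by rw [map_smul, ← hvdef, h2]
        have h4 : x • bB 0 = 0 := by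
          apply hinj
          rw [h3, map_zero]
        have h5 := congrArg (fun z => bB.repr z 0) h4
        simp only [map_smul, Finsupp.smul_apply, Module.Basis.repr_self, map_zero,
          Finsupp.coe_zero, Pi.zero_apply, smul_eq_mul, Finsupp.single_apply,
          if_pos rfl, if_true, eq_self_iff_true, mul_one] at h5
        exact hx0 h5
      obtain ⟨t, ht0, htu⟩ := exists_unit_combination hfin vc hv
      set h : C →ₗ[A] A := ∑ j, t j • bC.coord j with hh
      have hhv : h v = ∑ j, t j * vc j := by
        rw [hh]
        simp [LinearMap.sum_apply, Module.Basis.coord_apply, smul_eq_mul, hvc]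
      have hhb0 : h (bC 0) = 1 := by
        rw [hh]
        simp only [LinearMap.sum_apply, LinearMap.smul_apply, Module.Basis.coord_apply,
          Module.Basis.repr_self, smul_eq_mul, Finsupp.single_apply]
        rw [Finset.sum_eq_single 0]
        · rw [if_pos rfl, mul_one, ht0]
        · intro j _ hj
          rw [if_neg (Ne.symm hj), mul_zero]
        · intro hj
          exact absurd (Finset.mem_univ _) hj
      have hunit : IsUnit (h v) := by rw [hhv]; exact htu
      obtain ⟨bC'⟩ := ker_basis bC h (by rw [hhb0]; exact isUnit_one)
      obtain ⟨bB'⟩ := ker_basis bB (h ∘ₗ φ) (by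
        show IsUnit (h (φ (bB 0)))
        exact hunit)
      have hmem : ∀ x ∈ LinearMap.ker (h ∘ₗ φ), φ x ∈ LinearMap.ker h := by
        intro x hx
        exact LinearMap.mem_ker.mpr hx
      have hπv : π v = 0 := hexact.apply_apply_eq_zero (bB 0)
      refine ?_
      let φ' : LinearMap.ker (h ∘ₗ φ) →ₗ[A] LinearMap.ker h := φ.restrict hmem
      let π' : LinearMap.ker h →ₗ[A] N := π ∘ₗ (LinearMap.ker h).subtype
      have hφ'val : ∀ a : LinearMap.ker (h ∘ₗ φ), ((φ' a : C)) = φ (a : B) :=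
        fun a => rfl
      have hπ'val : ∀ y : LinearMap.ker h, π' y = π (y : C) := fun y => rfl
      have hinj' : Function.Injective φ' := by
        intro a b hab
        have h1 : φ (a : B) = φ (b : B) := by
          rw [← hφ'val a, ← hφ'val b, hab]
        exact Subtype.ext (hinj h1)
      have hsurj' : Function.Surjective π' := by
        intro z
        obtain ⟨cc, rfl⟩ := hsurj z
        obtain ⟨su, hsu⟩ := hunit
        have hy : h (cc - ((↑su⁻¹ : A) * h cc) • v) = 0 := by
          rw [map_sub, map_smul, smul_eq_mul, ← hsu]
          rw [mul_comm ((↑su⁻¹ : A)) (h cc), mul_assoc, Units.inv_mul, mul_one,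
            sub_self]
        refine ⟨⟨cc - ((↑su⁻¹ : A) * h cc) • v, LinearMap.mem_ker.mpr hy⟩, ?_⟩
        rw [hπ'val]
        show π (cc - ((↑su⁻¹ : A) * h cc) • v) = π cc
        rw [map_sub, map_smul, hπv, smul_zero, sub_zero]
      have hexact' : Function.Exact φ' π' := by
        intro y
        constructor
        · intro hy0
          have : π (y : C) = 0 := hy0
          obtain ⟨bb, hbb⟩ := (hexact (y : C)).mp this
          have hbbk : bb ∈ LinearMap.ker (h ∘ₗ φ) := by
            apply LinearMap.mem_ker.mpr
            show h (φ bb) = 0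
            rw [hbb]
            exact y.2
          refine ⟨⟨bb, hbbk⟩, ?_⟩
          apply Subtype.ext
          rw [hφ'val]
          exact hbb
        · rintro ⟨⟨bb, hbb⟩, rfl⟩
          show π (φ bb) = 0
          exact hexact.apply_apply_eq_zero bb
      obtain ⟨r, hr, ⟨e⟩⟩ := IH (LinearMap.ker (h ∘ₗ φ)) (LinearMap.ker h) N
        inferInstance inferInstance inferInstance c' bB' bC' φ' π' hinj' hsurj' hexact'
      exact ⟨r, by omega, ⟨e⟩⟩

lemma chain_free {A : Type v} [CommRing A] [Nontrivial A]
    (hfin : {m : Ideal A | m.IsMaximal}.Finite)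
    (hann : ∀ m : Ideal A, m.IsMaximal → ∃ x : A, x ≠ 0 ∧ ∀ a ∈ m, a * x = 0)
    (L : ℕ → Type v) [∀ n, AddCommGroup (L n)] [∀ n, Module A (L n)]
    (l : ℕ → ℕ) (bL : ∀ n, Module.Basis (Fin (l n)) A (L n))
    (d : ∀ n, L (n + 1) →ₗ[A] L n)
    (hd : ∀ n, Function.Exact (d (n + 1)) (d n))
    (N₀ : ℕ) (hvanish : ∀ n, N₀ < n → Subsingleton (L n)) :
    ∃ ρ : ℕ → ℕ,
      (∀ n, Nonempty ((L n ⧸ LinearMap.range (d n)) ≃ₗ[A] (Fin (ρ n) → A)))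
      ∧ (∀ n, ρ n + ρ (n + 1) = l n) ∧ (∀ n, N₀ < n → ρ n = 0) := by
  classical
  set ρ : ℕ → ℕ := fun n => Module.finrank A (L n ⧸ LinearMap.range (d n)) with hρ
  have hstep : ∀ n r', ((L (n+1) ⧸ LinearMap.range (d (n+1))) ≃ₗ[A] (Fin r' → A)) →
      ∃ r, r + r' = l n ∧ Nonempty ((L n ⧸ LinearMap.range (d n)) ≃ₗ[A] (Fin r → A)) := by
    intro n r' e'
    set bB := Module.Basis.ofEquivFun e' with hbB
    have hker : LinearMap.ker (d n) = LinearMap.range (d (n+1)) :=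
      LinearMap.exact_iff.mp (hd n)
    set φn : (L (n+1) ⧸ LinearMap.range (d (n+1))) →ₗ[A] L n :=
      Submodule.liftQ _ (d n) (le_of_eq hker.symm) with hφn
    have hinj : Function.Injective φn := by
      rw [← LinearMap.ker_eq_bot]
      exact Submodule.ker_liftQ_eq_bot _ _ _ (le_of_eq hker)
    have hexact : Function.Exact φn (LinearMap.range (d n)).mkQ := by
      rw [LinearMap.exact_iff]
      rw [Submodule.ker_mkQ, hφn, Submodule.range_liftQ]
    obtain ⟨r, hr, he⟩ := key_ses hfin hann r' _ _ _ inferInstance inferInstance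
      inferInstance (l n) bB (bL n) φn (LinearMap.range (d n)).mkQ hinj
      (Submodule.mkQ_surjective _) hexact
    exact ⟨r, hr, he⟩
  have hrank : ∀ n r, ((L n ⧸ LinearMap.range (d n)) ≃ₗ[A] (Fin r → A)) → ρ n = r := by
    intro n r e
    show Module.finrank A (L n ⧸ LinearMap.range (d n)) = r
    rw [LinearEquiv.finrank_eq e, Module.finrank_pi]
    simp
  have htriv : ∀ n, N₀ < n → Nonempty ((L n ⧸ LinearMap.range (d n)) ≃ₗ[A] (Fin 0 → A)) := by
    intro n hn
    haveI := hvanish n hn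
    haveI : Subsingleton (L n ⧸ LinearMap.range (d n)) :=
      (Submodule.mkQ_surjective _).subsingleton
    haveI : Subsingleton (Fin 0 → A) := ⟨fun f g => funext fun i => i.elim0⟩
    exact ⟨LinearEquiv.ofSubsingleton _ _⟩
  have hfull : ∀ n, Nonempty ((L n ⧸ LinearMap.range (d n)) ≃ₗ[A] (Fin (ρ n) → A)) := by
    have hdesc : ∀ k, Nonempty ((L (N₀ + 1 - k) ⧸ LinearMap.range (d (N₀ + 1 - k)))
        ≃ₗ[A] (Fin (ρ (N₀ + 1 - k)) → A)) := by
      intro k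
      induction k with
      | zero =>
        rw [Nat.sub_zero]
        obtain ⟨e⟩ := htriv (N₀ + 1) (by omega)
        rw [hrank (N₀ + 1) 0 e]
        exact ⟨e⟩
      | succ k ih =>
        by_cases hk : k ≤ N₀
        · have harith : N₀ + 1 - k = (N₀ + 1 - (k + 1)) + 1 := by omega
          rw [harith] at ih
          obtain ⟨e'⟩ := ih
          obtain ⟨r, hr, ⟨e⟩⟩ := hstep (N₀ + 1 - (k + 1)) _ e'
          rw [hrank _ r e]
          exact ⟨e⟩
        · have harith : N₀ + 1 - (k + 1) = N₀ + 1 - k := by omega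
          rw [harith]
          exact ih
    intro n
    by_cases hn : N₀ < n
    · obtain ⟨e⟩ := htriv n hn
      rw [hrank n 0 e]
      exact ⟨e⟩
    · have : n = N₀ + 1 - (N₀ + 1 - n) := by omega
      rw [this]
      exact hdesc _
  refine ⟨ρ, hfull, ?_, ?_⟩
  · intro n
    obtain ⟨e'⟩ := hfull (n + 1)
    obtain ⟨r, hr, ⟨e⟩⟩ := hstep n _ e'
    rw [hrank n r e]
    exact hr
  · intro n hn
    obtain ⟨e⟩ := htriv n hn
    exact hrank n 0 e

lemma isUnit_of_mem_nonZeroDivisors_localization {R : Type v} [CommRing R]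
    (q : Localization (nonZeroDivisors R))
    (hq : q ∈ nonZeroDivisors (Localization (nonZeroDivisors R))) : IsUnit q := by
  rw [mem_nonZeroDivisors_iff_right] at hq
  obtain ⟨⟨r, s⟩, hrs⟩ := IsLocalization.mk'_surjective (nonZeroDivisors R) q
  have hr : q * algebraMap R (Localization (nonZeroDivisors R)) (s : R) = algebraMap R (Localization (nonZeroDivisors R)) r := by
    rw [← hrs]; exact IsLocalization.mk'_spec _ _ _
  have hrnzd : r ∈ nonZeroDivisors R := by
    rw [mem_nonZeroDivisors_iff_right]
    intro t ht
    have h1 : (algebraMap R (Localization (nonZeroDivisors R)) t * algebraMap R (Localization (nonZeroDivisors R)) (s : R)) * q = 0 := by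
      rw [mul_assoc, mul_comm (algebraMap R (Localization (nonZeroDivisors R)) (s : R)) q, hr,
        ← _root_.map_mul, ht, map_zero]
    have h2 : algebraMap R (Localization (nonZeroDivisors R)) t * algebraMap R (Localization (nonZeroDivisors R)) (s : R) = 0 := hq _ h1
    rw [← _root_.map_mul] at h2
    have h3 : t * (s : R) = 0 := IsLocalization.injective (Localization (nonZeroDivisors R)) (le_refl (nonZeroDivisors R))
      (by rw [h2, map_zero])
    exact mem_nonZeroDivisors_iff_right.mp s.2 t h3
  have : IsUnit (q * algebraMap R (Localization (nonZeroDivisors R)) (s : R)) := by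
    rw [hr]
    exact IsLocalization.map_units (Localization (nonZeroDivisors R)) ⟨r, hrnzd⟩
  exact isUnit_of_mul_isUnit_left this

lemma localizedModule_subsingleton {R : Type v} [CommRing R] (S : Submonoid R)
    {M : Type v} [AddCommGroup M] [Module R M] [Subsingleton M] :
    Subsingleton (LocalizedModule S M) := by
  constructor
  intro x y
  induction x using LocalizedModule.induction_on with
  | _ m s =>
    induction y using LocalizedModule.induction_on with
    | _ m' s' =>
      rw [Subsingleton.elim m 0, Subsingleton.elim m' 0,
        LocalizedModule.zero_mk, LocalizedModule.zero_mk]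


end EulerAux

/-- If `M` is a finitely generated module of finite projective dimension over a commutative
noetherian local ring, with finite free resolution `F`, then `M` has rank and
`χ(M) = Σ_n (-1)^n rank(F_n)` equals `rank M`; in particular `χ(M) ≥ 0` and `χ(M)` does not
depend on the choice of finite free resolution. -/
theorem euler_characteristic_eq_rank
    (R : Type u) [CommRing R] [IsNoetherianRing R] [IsLocalRing R]
    (M : Type u) [AddCommGroup M] [Module R M] [Module.Finite R M]
    (F : Resolution R M) (hfree : F.IsFiniteFree) (hbdd : F.IsBounded) :
    ∃ r : ℕ, HasRank R M r ∧
      ∑ᶠ n : ℕ, (-1 : ℤ) ^ n * (Module.finrank R (F.C.X n) : ℤ) = (r : ℤ) := by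
  classical
  obtain ⟨N₀, hN₀⟩ := hbdd
  haveI hQnoeth : IsNoetherianRing (Localization (nonZeroDivisors R)) :=
    IsLocalization.isNoetherianRing (nonZeroDivisors R) _ inferInstance
  haveI hQnt : Nontrivial (Localization (nonZeroDivisors R)) := by
    have h := IsLocalization.injective (M := nonZeroDivisors R)
      (Localization (nonZeroDivisors R)) (le_refl (nonZeroDivisors R))
    exact ⟨⟨algebraMap R _ 0, algebraMap R _ 1, fun he => zero_ne_one (h he)⟩⟩
  have hu : ∀ a ∈ nonZeroDivisors (Localization (nonZeroDivisors R)), IsUnit a :=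
    fun a ha => EulerAux.isUnit_of_mem_nonZeroDivisors_localization a ha
  have hfin := EulerAux.maximal_finite hu
  have hann := EulerAux.maximal_ann hu
  obtain ⟨ρ, hfull, hrel, hρ0⟩ := EulerAux.chain_free hfin hann
    (fun n => LocalizedModule (nonZeroDivisors R) (F.C.X n))
    (fun n => Module.finrank R (F.C.X n))
    (fun n => by
      haveI := (hfree n).1; haveI := (hfree n).2
      exact ((Module.finBasis R (F.C.X n)).baseChange (Localization (nonZeroDivisors R))).map
        (IsLocalizedModule.isBaseChange (nonZeroDivisors R) (Localization (nonZeroDivisors R))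
          (LocalizedModule.mkLinearMap (nonZeroDivisors R) (F.C.X n))).equiv)
    (fun n => LocalizedModule.map (nonZeroDivisors R)
      ((F.C.d (n+1) n).hom : F.C.X (n+1) →ₗ[R] F.C.X n))
    (fun n => LocalizedModule.map_exact (nonZeroDivisors R) _ _ (F.exact_succ n))
    N₀
    (fun n hn => by
      haveI := hN₀ n hn
      exact EulerAux.localizedModule_subsingleton _)
  -- augmentation
  have hex0 : Function.Exact
      (LocalizedModule.map (nonZeroDivisors R) ((F.C.d 1 0).hom : F.C.X 1 →ₗ[R] F.C.X 0))
      (LocalizedModule.map (nonZeroDivisors R) F.aug) :=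
    LocalizedModule.map_exact (nonZeroDivisors R) _ _ F.exact_zero
  have haugsurj : Function.Surjective (LocalizedModule.map (nonZeroDivisors R) F.aug) :=
    IsLocalizedModule.map_surjective (nonZeroDivisors R) _ _ F.aug F.aug_surj
  have hker : LinearMap.ker (LocalizedModule.map (nonZeroDivisors R) F.aug)
      = LinearMap.range (LocalizedModule.map (nonZeroDivisors R)
          ((F.C.d 1 0).hom : F.C.X 1 →ₗ[R] F.C.X 0)) := LinearMap.exact_iff.mp hex0
  have e0 : (LocalizedModule (nonZeroDivisors R) (F.C.X 0) ⧸ LinearMap.range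
        (LocalizedModule.map (nonZeroDivisors R) ((F.C.d 1 0).hom : F.C.X 1 →ₗ[R] F.C.X 0)))
      ≃ₗ[Localization (nonZeroDivisors R)] LocalizedModule (nonZeroDivisors R) M :=
    (Submodule.quotEquivOfEq _ _ hker.symm).trans
      ((LocalizedModule.map (nonZeroDivisors R) F.aug).quotKerEquivOfSurjective haugsurj)
  obtain ⟨e⟩ := hfull 0
  refine ⟨ρ 0, ⟨e0.symm.trans e⟩, ?_⟩
  -- the alternating sum
  have hl0 : ∀ n, N₀ < n → Module.finrank R (F.C.X n) = 0 := fun n hn => by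
    haveI := hN₀ n hn
    exact Module.finrank_zero_of_subsingleton
  have htel : ∀ T : ℕ, ∑ n ∈ Finset.range (T+1),
        (-1:ℤ)^n * (Module.finrank R (F.C.X n) : ℤ)
      = (ρ 0 : ℤ) + (-1)^T * (ρ (T+1) : ℤ) := by
    intro T
    induction T with
    | zero =>
      simp only [zero_add, Finset.range_one, Finset.sum_singleton, pow_zero, one_mul]
      have h : ρ 0 + ρ 1 = Module.finrank R (F.C.X 0) := hrel 0
      omega
    | succ T ih =>
      rw [Finset.sum_range_succ, ih]
      have hc : (Module.finrank R (F.C.X (T+1)) : ℤ) = (ρ (T+1) : ℤ) + (ρ (T+2) : ℤ) := by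
        exact_mod_cast congrArg (Nat.cast : ℕ → ℤ) (hrel (T+1)).symm
      rw [hc, pow_succ]
      ring
  have hsupp : Function.support (fun n : ℕ => (-1:ℤ)^n * (Module.finrank R (F.C.X n) : ℤ))
      ⊆ ↑(Finset.range (N₀+1)) := by
    intro n hn
    simp only [Function.mem_support] at hn
    simp only [Finset.coe_range, Set.mem_Iio]
    by_contra hcon
    push_neg at hcon
    rw [hl0 n (by omega)] at hn
    simp at hn
  rw [finsum_eq_sum_of_support_subset _ hsupp]
  have h := htel N₀
  rw [hρ0 (N₀+1) (by omega)] at h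
  simpa using h
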